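/- Let L be a vector lattice of random variables and π: L → L' a monotone non-decreasing map. If π is continuous from below (i.e., X_n ↑ X implies π(X_n) ↑ π(X)), then π is order lower semicontinuous with respect to sequences uniformly bounded from below: whenever X_n ≥ c for all n and X_n order-converges to X, one has π(X) ≤ liminf_n π(X_n). -/
import Mathlib


open MeasureTheory Filter Set Topology

noncomputable section

variable {Ω : Type*}

private lemma ereal_le_of_le_add (a x : EReal) (hx : x ≠ ⊥) (Yv : ℕ → EReal)
    (hY0 : ∀ n, 0 ≤ Yv n) (h : ∀ n, a ≤ x + Yv n) (hinf : (⨅ n, Yv n) = 0) :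
    a ≤ x := by
  rcases eq_or_ne x ⊤ with hxt | hxt
  · simp [hxt]
  have hsub : a - x ≤ 0 := by
    rw [← hinf]
    refine le_iInf fun n => ?_
    rw [EReal.sub_le_iff_le_add (Or.inl hx) (Or.inl hxt), add_comm]
    exact h n
  have := (EReal.sub_le_iff_le_add (b := x) (c := (0 : EReal))
    (Or.inl hx) (Or.inl hxt)).1 hsub
  simpa using this

/-- The lattice of `m`-measurable random variables bounded from below
(possibly `+∞`-valued). -/
def Lbb (m : MeasurableSpace Ω) : Set (Ω → EReal) :=
  {X | Measurable[m] X ∧ ∃ c : ℝ, ∀ ω, (c : EReal) ≤ X ω}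

/-- a monotone non-decreasing map `π : L^{bb}_T → L^{bb}_t` which is
continuous from below is order lower semicontinuous with respect to sequences
uniformly bounded from below: if `X_n ≥ c` for all `n` and `X_n` order-converges to
`X` (i.e. there is `Y_n ↓ 0` with `|X_n − X| ≤ Y_n`), then
`π(X) ≤ liminf_n π(X_n)` a.s. -/
theorem stmt_0 (F m : MeasurableSpace Ω) (hm : m ≤ F) (P : @Measure Ω F)
    (π : (Ω → EReal) → Ω → EReal)
    (hmaps : ∀ X ∈ Lbb F, π X ∈ Lbb m)
    (hmono : ∀ X ∈ Lbb F, ∀ Y ∈ Lbb F, (∀ ω, Y ω ≤ X ω) → ∀ᵐ ω ∂P, π Y ω ≤ π X ω)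
    (hcont : ∀ (Zs : ℕ → Ω → EReal) (Z : Ω → EReal), (∀ n, Zs n ∈ Lbb F) → Z ∈ Lbb F →
      (∀ ω, Monotone fun n => Zs n ω) → (∀ ω, Z ω = ⨆ n, Zs n ω) →
      ∀ᵐ ω ∂P, π Z ω = ⨆ n, π (Zs n) ω)
    (Xs : ℕ → Ω → EReal) (X : Ω → EReal)
    (hXs : ∀ n, Xs n ∈ Lbb F) (hX : X ∈ Lbb F)
    (c : ℝ) (hbd : ∀ n ω, (c : EReal) ≤ Xs n ω)
    (Y : ℕ → Ω → EReal)
    (hY0 : ∀ n ω, 0 ≤ Y n ω)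
    (hYanti : ∀ ω, Antitone fun n => Y n ω)
    (hYinf : ∀ ω, (⨅ n, Y n ω) = 0)
    (hord : ∀ n ω, X ω - Y n ω ≤ Xs n ω ∧ Xs n ω ≤ X ω + Y n ω) :
    ∀ᵐ ω ∂P, π X ω ≤ liminf (fun n => π (Xs n) ω) atTop := by
  -- the running infimum
  set Z : ℕ → Ω → EReal := fun n ω => ⨅ k, Xs (n + k) ω with hZdef
  have hXbot : ∀ ω, X ω ≠ ⊥ := by
    intro ω h
    obtain ⟨c', hc'⟩ := hX.2
    exact EReal.coe_ne_bot c' (le_bot_iff.1 (h ▸ hc' ω))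
  have hYbot : ∀ n ω, Y n ω ≠ ⊥ := fun n ω h =>
    absurd (h ▸ hY0 n ω) (by simp)
  -- tail infima of Y vanish
  have htail : ∀ n ω, (⨅ k, Y (n + k) ω) = 0 := by
    intro n ω
    refine le_antisymm ?_ (le_iInf fun k => hY0 _ ω)
    rw [← hYinf ω]
    exact le_iInf fun k => iInf_le_of_le k (hYanti ω (Nat.le_add_left k n))
  have hZmem : ∀ n, Z n ∈ Lbb F :=
    fun n => ⟨Measurable.iInf fun k => (hXs (n + k)).1,
      c, fun ω => le_iInf fun k => hbd _ ω⟩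
  have hZmono : ∀ ω, Monotone fun n => Z n ω := by
    intro ω n m hnm
    refine le_iInf fun k => iInf_le_of_le (m - n + k) ?_
    have : n + (m - n + k) = m + k := by omega
    rw [this]
  have hZleX : ∀ n ω, Z n ω ≤ X ω := by
    intro n ω
    refine ereal_le_of_le_add _ _ (hXbot ω) (fun k => Y (n + k) ω)
      (fun k => hY0 _ ω) (fun k => ?_) (htail n ω)
    exact le_trans (iInf_le _ k) (hord (n + k) ω).2
  have hXeq : ∀ ω, X ω = ⨆ n, Z n ω := by
    intro ω
    refine le_antisymm ?_ (iSup_le fun n => hZleX n ω)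
    have hSbot : (⨆ n, Z n ω) ≠ ⊥ := by
      intro h
      have hc : (c : EReal) ≤ Z 0 ω := le_iInf fun k => hbd (0 + k) ω
      have : (c : EReal) ≤ ⊥ := h ▸ le_trans hc (le_iSup (fun n => Z n ω) 0)
      exact EReal.coe_ne_bot c (le_bot_iff.1 this)
    refine ereal_le_of_le_add _ _ hSbot (fun n => Y n ω) (fun n => hY0 n ω)
      (fun n => ?_) (hYinf ω)
    have hZn : X ω - Y n ω ≤ Z n ω := by
      refine le_iInf fun k => ?_
      calc X ω - Y n ω ≤ X ω - Y (n + k) ω :=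
            EReal.sub_le_sub le_rfl (hYanti ω (Nat.le_add_right n k))
        _ ≤ Xs (n + k) ω := (hord (n + k) ω).1
    have hsub : X ω - Y n ω ≤ ⨆ m, Z m ω := hZn.trans (le_iSup (fun m => Z m ω) n)
    rw [EReal.sub_le_iff_le_add (Or.inl (hYbot n ω)) (Or.inr hSbot)] at hsub
    exact hsub
  -- a.e. statements
  have h1 : ∀ᵐ ω ∂P, ∀ n k, π (Z n) ω ≤ π (Xs (n + k)) ω := by
    rw [ae_all_iff]
    intro n
    rw [ae_all_iff]
    intro k
    exact hmono (Xs (n + k)) (hXs _) (Z n) (hZmem n) (fun ω => iInf_le _ k)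
  have h2 := hcont Z X hZmem hX hZmono hXeq
  filter_upwards [h1, h2] with ω h1 h2
  rw [h2]
  refine iSup_le fun n => ?_
  refine le_liminf_of_le (by isBoundedDefault) ?_
  rw [eventually_atTop]
  refine ⟨n, fun k hk => ?_⟩
  have := h1 n (k - n)
  rwa [Nat.add_sub_cancel' hk] at this
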